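/- Let F be a finite field of odd cardinality q, let φ be the quadratic character of F (the unique multiplicative character of order 2), and let T be a multiplicative character of F with values in ℂ such that T² is nontrivial. Then J(T⁻¹, T²) · J(φ·T⁻¹, T²) = q · T(16). -/

import Mathlib

open Finset MulChar

section aux

variable {F : Type*} [Field F] [Fintype F] [DecidableEq F]
variable {K : Type*} [Field K]

private lemma phi_mul_self {φ : MulChar F K} (hφ : φ ^ 2 = 1) {s : F} (hs : s ≠ 0) :
    φ s * φ s = 1 := by
  have h1 : (φ ^ 2) s = (1 : MulChar F K) s := by rw [hφ]
  rwa [φ.pow_apply' two_ne_zero, MulChar.one_apply (isUnit_iff_ne_zero.mpr hs), sq] at h1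

private lemma phi_isSquare {φ : MulChar F K} (hφ : φ ^ 2 = 1) {t : F} (ht : t ≠ 0)
    (h : IsSquare t) : φ t = 1 := by
  obtain ⟨s, rfl⟩ := h
  have hs : s ≠ 0 := fun h => ht (by simp [h])
  rw [map_mul]
  exact phi_mul_self hφ hs

private lemma phi_nonsquare (hF2 : ringChar F ≠ 2) {φ : MulChar F K} (hφ : φ ^ 2 = 1)
    (hφ' : φ ≠ 1) {t : F} (ht : t ≠ 0) (h : ¬ IsSquare t) : φ t = -1 := by
  have hq : IsQuadratic φ := isQuadratic_iff_sq_eq_one.mpr hφ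
  rcases hq t with h0 | h1 | h2
  · have := phi_mul_self hφ ht
    rw [h0, mul_zero] at this
    exact absurd this.symm one_ne_zero
  · exfalso
    apply hφ'
    refine MulChar.ext fun a => ?_
    rw [MulChar.one_apply_coe]
    by_cases hs : IsSquare (a : F)
    · exact phi_isSquare hφ a.ne_zero hs
    · have hta : IsSquare ((a : F) * t) := by
        have ha' := (FiniteField.pow_dichotomy hF2 a.ne_zero).resolve_left
          (fun hh => hs ((FiniteField.isSquare_iff hF2 a.ne_zero).mpr hh))
        have ht' := (FiniteField.pow_dichotomy hF2 ht).resolve_left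
          (fun hh => h ((FiniteField.isSquare_iff hF2 ht).mpr hh))
        refine (FiniteField.isSquare_iff hF2 (mul_ne_zero a.ne_zero ht)).mpr ?_
        rw [mul_pow, ha', ht', neg_mul_neg, one_mul]
      have := phi_isSquare hφ (mul_ne_zero a.ne_zero ht) hta
      rw [map_mul, h1, mul_one] at this
      exact this
  · exact h2



set_option linter.unusedSectionVars false

private lemma count_sq (hF2 : ringChar F ≠ 2) {φ : MulChar F K} (hφ : φ ^ 2 = 1)
    (hφ' : φ ≠ 1) (t : F) :
    ((univ.filter fun u : F => u ^ 2 = t).card : K) = 1 + φ t := by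
  have hc := quadraticChar_card_sqrts hF2 t
  have hfin : {x : F | x ^ 2 = t}.toFinset = univ.filter fun u : F => u ^ 2 = t := by
    ext x; simp
  rw [hfin] at hc
  have : ((univ.filter fun u : F => u ^ 2 = t).card : K)
      = ((((univ.filter fun u : F => u ^ 2 = t).card : ℤ)) : K) := by push_cast; ring
  rw [this, hc]
  push_cast
  have : ((quadraticChar F t : ℤ) : K) = φ t := by
    by_cases ht : t = 0
    · simp [ht]
    by_cases hs : IsSquare t
    · rw [(quadraticChar_one_iff_isSquare ht).mpr hs, phi_isSquare hφ ht hs]; norm_num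
    · rw [quadraticChar_neg_one_iff_not_isSquare.mpr hs, phi_nonsquare hF2 hφ hφ' ht hs]
      norm_num
  rw [this]; ring

private lemma sum_sq_eq (hF2 : ringChar F ≠ 2) {φ : MulChar F K} (hφ : φ ^ 2 = 1)
    (hφ' : φ ≠ 1) (f : F → K) :
    ∑ u : F, f (u ^ 2) = ∑ t : F, (1 + φ t) * f t := by
  rw [← Finset.sum_fiberwise_of_maps_to (g := fun u : F => u ^ 2)
    (fun x _ => mem_univ _) (fun u => f (u ^ 2))]
  refine Finset.sum_congr rfl fun t _ => ?_
  rw [← count_sq hF2 hφ hφ' t]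
  rw [Finset.sum_congr rfl (fun u hu => ?_), Finset.sum_const, nsmul_eq_mul]
  rw [(Finset.mem_filter.mp hu).2]



private lemma jacobiSum_self_eq (h2 : (2 : F) ≠ 0) (χ : MulChar F K) :
    χ 4 * jacobiSum χ χ = ∑ u : F, χ (1 - u ^ 2) := by
  have h4 : (4 : F) ≠ 0 := by
    intro h
    apply h2
    have : (4 : F) = 2 * 2 := by norm_num
    rcases mul_eq_zero.mp (this ▸ h) with h' | h' <;> exact h'
  rw [jacobiSum, Finset.mul_sum]
  refine (Fintype.sum_bijective (fun u : F => (1 - u) / 2) ?_ _ _ fun u => ?_).symm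
  · refine Function.bijective_iff_has_inverse.mpr ⟨fun x => 1 - 2 * x, fun u => ?_, fun x => ?_⟩
    · field_simp
      ring
    · field_simp
      ring
  · rw [← map_mul, ← map_mul]
    congr 1
    field_simp
    ring

private lemma sum_one_sub_sq_eq (hF2 : ringChar F ≠ 2) {φ : MulChar F K} (hφ : φ ^ 2 = 1)
    (hφ' : φ ≠ 1) {χ : MulChar F K} (hχ : χ ≠ 1) :
    ∑ u : F, χ (1 - u ^ 2) = jacobiSum φ χ := by
  rw [sum_sq_eq hF2 hφ hφ' (fun t => χ (1 - t))]
  simp_rw [add_mul, one_mul]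
  rw [Finset.sum_add_distrib]
  have h0 : ∑ t : F, χ (1 - t) = 0 := by
    rw [← χ.sum_eq_zero_of_ne_one hχ]
    exact Fintype.sum_equiv (Equiv.subLeft 1) _ _ (fun t => by simp)
  rw [h0, zero_add, jacobiSum]

private lemma hasse_davenport (hK : (Fintype.card F : K) ≠ 0) {ψ : AddChar F K}
    (hψ : ψ.IsPrimitive) (hF2 : ringChar F ≠ 2) (h2 : (2 : F) ≠ 0)
    {φ : MulChar F K} (hφ : φ ^ 2 = 1) (hφ' : φ ≠ 1)
    {χ : MulChar F K} (hχ2 : χ ^ 2 ≠ 1) :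
    χ 4 * (gaussSum χ ψ * gaussSum (φ * χ) ψ) = gaussSum φ ψ * gaussSum (χ ^ 2) ψ := by
  have hχ : χ ≠ 1 := fun h => hχ2 (by rw [h, one_pow])
  have hφχ : φ * χ ≠ 1 := by
    intro h
    apply hχ2
    have hc : χ = φ⁻¹ := eq_inv_of_mul_eq_one_left (by rwa [mul_comm] at h)
    rw [hc, inv_pow, hφ, inv_one]
  have E1 : gaussSum (χ ^ 2) ψ * jacobiSum χ χ = gaussSum χ ψ * gaussSum χ ψ := by
    rw [sq]
    exact jacobiSum_mul_nontrivial (by rwa [← sq]) ψ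
  have E2 : gaussSum (φ * χ) ψ * jacobiSum φ χ = gaussSum φ ψ * gaussSum χ ψ :=
    jacobiSum_mul_nontrivial hφχ ψ
  have E3 : χ 4 * jacobiSum χ χ = jacobiSum φ χ :=
    (jacobiSum_self_eq h2 χ).trans (sum_one_sub_sq_eq hF2 hφ hφ' hχ)
  have hg : gaussSum χ ψ ≠ 0 := gaussSum_ne_zero_of_nontrivial hK hχ hψ
  apply mul_left_cancel₀ hg
  linear_combination (-(χ 4 * gaussSum (φ * χ) ψ)) * E1 + gaussSum (χ ^ 2) ψ * E2 +
    (gaussSum (φ * χ) ψ * gaussSum (χ ^ 2) ψ) * E3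

end aux


/-- Let `F` be a finite field of odd cardinality `q`, `φ` its quadratic character
(the unique multiplicative character of order 2), and `T` a multiplicative character
with values in `ℂ` such that `T²` is nontrivial.  Then
`J(T⁻¹, T²) · J(φ·T⁻¹, T²) = q · T(16)`. -/
theorem jacobiSum_wellPoised_product
    (F : Type*) [Field F] [Fintype F] (hodd : Odd (Fintype.card F))
    (φ : MulChar F ℂ) (hφ : φ ^ 2 = 1) (hφ' : φ ≠ 1)
    (T : MulChar F ℂ) (hT : T ^ 2 ≠ 1) :
    jacobiSum T⁻¹ (T ^ 2) * jacobiSum (φ * T⁻¹) (T ^ 2)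
      = (Fintype.card F : ℂ) * T 16 := by
  classical
  have hF2 : ringChar F ≠ 2 := by
    intro h
    have h1 := FiniteField.even_card_of_char_two h
    have h2 := Nat.odd_iff.mp hodd
    omega
  have h2 : (2 : F) ≠ 0 := Ring.two_ne_zero hF2
  have h4 : (4 : F) ≠ 0 := by
    intro h
    apply h2
    have h44 : (4 : F) = 2 * 2 := by norm_num
    rcases mul_eq_zero.mp (h44 ▸ h) with h' | h' <;> exact h'
  have hring : ringChar ℂ ≠ ringChar F := by
    rw [ringChar.eq_zero]
    exact (CharP.ringChar_ne_zero_of_finite F).symm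
  let ψ := AddChar.FiniteField.primitiveChar F ℂ hring
  let FF := CyclotomicField ψ.n ℂ
  let i : ℂ →+* FF := algebraMap ℂ FF
  have hinj : Function.Injective i := i.injective
  letI : CharZero FF := charZero_of_injective_algebraMap hinj
  have hK : (Fintype.card F : FF) ≠ 0 := Nat.cast_ne_zero.mpr Fintype.card_ne_zero
  set T' : MulChar F FF := T.ringHomComp i with hT'def
  set φ' : MulChar F FF := φ.ringHomComp i with hφ'def
  apply hinj
  rw [map_mul, map_mul, ← jacobiSum_ringHomComp, ← jacobiSum_ringHomComp, map_natCast]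
  rw [← MulChar.ringHomComp_inv, ← MulChar.ringHomComp_pow, MulChar.ringHomComp_mul,
    ← MulChar.ringHomComp_inv]
  show jacobiSum T'⁻¹ (T' ^ 2) * jacobiSum (φ' * T'⁻¹) (T' ^ 2)
      = (Fintype.card F : FF) * T' 16
  -- transported hypotheses
  have hT'2 : T' ^ 2 ≠ 1 := by
    rw [hT'def, MulChar.ringHomComp_pow]
    exact (MulChar.ringHomComp_ne_one_iff hinj).mpr hT
  have hφ'2 : φ' ^ 2 = 1 := by
    rw [hφ'def, MulChar.ringHomComp_pow, hφ, MulChar.ringHomComp_one]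
  have hφ'1 : φ' ≠ 1 := (MulChar.ringHomComp_ne_one_iff hinj).mpr hφ'
  have hT'1 : T' ≠ 1 := fun h => hT'2 (by rw [h, one_pow])
  have hφT' : φ' * T' ≠ 1 := by
    intro h
    apply hT'2
    have hc : T' = φ'⁻¹ := eq_inv_of_mul_eq_one_left (by rwa [mul_comm] at h)
    rw [hc, inv_pow, hφ'2, inv_one]
  set ψc := ψ.char with hψc
  have hψ : ψc.IsPrimitive := ψ.prim
  -- the five main identities
  have hprod1 : T'⁻¹ * T' ^ 2 = T' := by rw [sq, inv_mul_cancel_left]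
  have E1 : gaussSum T' ψc * jacobiSum T'⁻¹ (T' ^ 2)
      = gaussSum T'⁻¹ ψc * gaussSum (T' ^ 2) ψc := by
    have h := jacobiSum_mul_nontrivial (χ := T'⁻¹) (φ := T' ^ 2)
      (by rw [hprod1]; exact hT'1) ψc
    rwa [hprod1] at h
  have hprod2 : (φ' * T'⁻¹) * T' ^ 2 = φ' * T' := by
    rw [sq, mul_assoc, inv_mul_cancel_left]
  have E2 : gaussSum (φ' * T') ψc * jacobiSum (φ' * T'⁻¹) (T' ^ 2)
      = gaussSum (φ' * T'⁻¹) ψc * gaussSum (T' ^ 2) ψc := by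
    have h := jacobiSum_mul_nontrivial (χ := φ' * T'⁻¹) (φ := T' ^ 2)
      (by rw [hprod2]; exact hφT') ψc
    rwa [hprod2] at h
  have E3 : T' 4 * (gaussSum T' ψc * gaussSum (φ' * T') ψc)
      = gaussSum φ' ψc * gaussSum (T' ^ 2) ψc :=
    hasse_davenport hK hψ hF2 h2 hφ'2 hφ'1 hT'2
  have hB : (φ' * T'⁻¹) ^ 2 = (T' ^ 2)⁻¹ := by
    rw [mul_pow, hφ'2, one_mul, inv_pow]
  have hA : φ' * (φ' * T'⁻¹) = T'⁻¹ := by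
    rw [← mul_assoc, ← sq, hφ'2, one_mul]
  have hφ4 : φ' (4 : F) = 1 := by
    have h44 : (4 : F) = 2 * 2 := by norm_num
    rw [h44, map_mul]
    exact phi_mul_self hφ'2 h2
  have hval4 : (φ' * T'⁻¹) (4 : F) = T'⁻¹ (4 : F) := by
    rw [MulChar.mul_apply, hφ4, one_mul]
  have E4 : T'⁻¹ 4 * (gaussSum (φ' * T'⁻¹) ψc * gaussSum T'⁻¹ ψc)
      = gaussSum φ' ψc * gaussSum ((T' ^ 2)⁻¹) ψc := by
    have h := hasse_davenport hK hψ hF2 h2 hφ'2 hφ'1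
      (χ := φ' * T'⁻¹) (by rw [hB]; exact inv_ne_one.mpr hT'2)
    rwa [hA, hB, hval4] at h
  have E5 : gaussSum (T' ^ 2) ψc * gaussSum ((T' ^ 2)⁻¹) ψc = (Fintype.card F : FF) := by
    have h5 := gaussSum_mul_gaussSum_eq_card hT'2 hψ
    have h6 := mul_gaussSum_inv_eq_gaussSum ((T' ^ 2)⁻¹) ψc
    have hval : ((T' ^ 2)⁻¹) (-1 : F) = 1 := by
      rw [MulChar.inv_apply', inv_neg, inv_one, MulChar.pow_apply' _ two_ne_zero,
        ← map_pow, neg_one_sq, map_one]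
    rw [hval, one_mul] at h6
    rwa [h6] at h5
  have ht : T' 4 * T'⁻¹ 4 = 1 := by
    rw [← MulChar.mul_apply, mul_inv_cancel, MulChar.one_apply (isUnit_iff_ne_zero.mpr h4)]
  have h16 : T' 4 * T' 4 = T' 16 := by
    rw [← map_mul]
    norm_num
  -- nonvanishing
  have ha : gaussSum T' ψc ≠ 0 := gaussSum_ne_zero_of_nontrivial hK hT'1 hψ
  have hb : gaussSum (φ' * T') ψc ≠ 0 := gaussSum_ne_zero_of_nontrivial hK hφT' hψ
  have hp : gaussSum φ' ψc ≠ 0 := gaussSum_ne_zero_of_nontrivial hK hφ'1 hψ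
  have ht4 : T' 4 ≠ 0 := left_ne_zero_of_mul_eq_one ht
  have F4' : gaussSum (φ' * T'⁻¹) ψc * gaussSum T'⁻¹ ψc
      = T' 4 * (gaussSum φ' ψc * gaussSum ((T' ^ 2)⁻¹) ψc) := by
    linear_combination T' 4 * E4 -
      (gaussSum (φ' * T'⁻¹) ψc * gaussSum T'⁻¹ ψc) * ht
  apply mul_left_cancel₀
    (mul_ne_zero ht4 (mul_ne_zero ha (mul_ne_zero hb hp))
      : T' 4 * (gaussSum T' ψc * (gaussSum (φ' * T') ψc * gaussSum φ' ψc)) ≠ 0)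
  linear_combination (T' 4 * gaussSum φ' ψc * gaussSum (φ' * T') ψc
      * jacobiSum (φ' * T'⁻¹) (T' ^ 2)) * E1 +
    (T' 4 * gaussSum φ' ψc * gaussSum T'⁻¹ ψc * gaussSum (T' ^ 2) ψc) * E2 +
    (T' 4 * gaussSum φ' ψc * gaussSum (T' ^ 2) ψc ^ 2) * F4' +
    (gaussSum φ' ψc ^ 2 * gaussSum (T' ^ 2) ψc ^ 2 * gaussSum ((T' ^ 2)⁻¹) ψc) * h16 +
    (T' 16 * gaussSum φ' ψc ^ 2 * gaussSum (T' ^ 2) ψc) * E5 +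
    (-((Fintype.card F : FF) * T' 16)) * E3 +
    ((1 - gaussSum φ' ψc) * (Fintype.card F : FF) * T' 16) * E3
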